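/- Consider the second-order differential operator (K^S f)(x) = (μx − x³) f'(x) + (σ²/2) f''(x) on smooth functions on ℝ in the deterministic limit σ = 0: (K^S f)(x) = (μx − x³) f'(x) with μ < 0. Then for each nonnegative integer n, the function φₙ(x) = (x/√(x² + |μ|))^n satisfies K^S φₙ = nμ φₙ on ℝ. -/

import Mathlib

theorem stmt12 (μ : ℝ) (hμ : μ < 0) (n : ℕ) :
    ∀ x : ℝ,
      (μ * x - x ^ 3) * deriv (fun y : ℝ => (y / Real.sqrt (y ^ 2 + |μ|)) ^ n) x =
        (n : ℝ) * μ * (x / Real.sqrt (x ^ 2 + |μ|)) ^ n := by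
  intro x
  have hμ' : |μ| = -μ := abs_of_neg hμ
  simp only [hμ']
  have hspos : 0 < x ^ 2 + -μ := by nlinarith [sq_nonneg x]
  have hsqpos : 0 < Real.sqrt (x ^ 2 + -μ) := Real.sqrt_pos.mpr hspos
  have hsq : Real.sqrt (x ^ 2 + -μ) ≠ 0 := hsqpos.ne'
  have hss : Real.sqrt (x ^ 2 + -μ) ^ 2 = x ^ 2 + -μ := Real.sq_sqrt hspos.le
  have h1 : HasDerivAt (fun y : ℝ => y ^ 2 + -μ) (2 * x) x := by
    simpa using (hasDerivAt_pow 2 x).add_const (-μ)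
  have h2 : HasDerivAt (fun y : ℝ => Real.sqrt (y ^ 2 + -μ))
      (x / Real.sqrt (x ^ 2 + -μ)) x := by
    have := (Real.hasDerivAt_sqrt hspos.ne').comp x h1
    refine HasDerivAt.congr_deriv this ?_
    field_simp
  have h3 : HasDerivAt (fun y : ℝ => y / Real.sqrt (y ^ 2 + -μ))
      (-μ / ((x ^ 2 + -μ) * Real.sqrt (x ^ 2 + -μ))) x := by
    have := (hasDerivAt_id x).fun_div h2 hsq
    refine HasDerivAt.congr_deriv this ?_
    rw [← hss]
    simp only [id]
    field_simp
    rw [Real.sqrt_sq (Real.sqrt_nonneg _), ← sub_eq_add_neg] at *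
    rw [hss]
    ring
  have h4 := h3.fun_pow n
  rw [h4.deriv]
  rcases n with _ | m
  · simp
  · have key : (μ * x - x ^ 3) * (-μ / ((x ^ 2 + -μ) * Real.sqrt (x ^ 2 + -μ))) =
        μ * (x / Real.sqrt (x ^ 2 + -μ)) := by
      field_simp
      ring
    simp only [Nat.add_sub_cancel]
    push_cast
    calc (μ * x - x ^ 3) * ((↑m + 1) * (x / Real.sqrt (x ^ 2 + -μ)) ^ m *
          (-μ / ((x ^ 2 + -μ) * Real.sqrt (x ^ 2 + -μ))))
        = (↑m + 1) * (x / Real.sqrt (x ^ 2 + -μ)) ^ m *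
          ((μ * x - x ^ 3) * (-μ / ((x ^ 2 + -μ) * Real.sqrt (x ^ 2 + -μ)))) := by ring
      _ = (↑m + 1) * μ * (x / Real.sqrt (x ^ 2 + -μ)) ^ (m + 1) := by rw [key]; ring
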